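/- Let R_S : ℝ^d → ℝ be differentiable with β-Lipschitz gradient and bounded below by R_S(x_*). On a probability space with a filtration (𝔉_t), let (y_t) be an adapted sequence of random vectors in ℝ^d with y_0 deterministic, and (g_t) random vectors with g_t measurable with respect to 𝔉_{t+1}, E[g_t | 𝔉_t] = ∇R_S(y_t), and E‖g_t‖² ≤ σ² for all t. Suppose y_{t+1} = y_t − γ·g_t for a fixed learning rate γ > 0 satisfying γ ≤ 1/β. Then for every T ≥ 1, min_{0 ≤ t ≤ T−1} E‖∇R_S(y_t)‖² ≤ (R_S(y_0) − R_S(x_*))/(γT) + β·γ·σ²/2. -/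

import Mathlib

open MeasureTheory
open scoped RealInnerProductSpace

lemma coord_abs_le_norm' {d : ℕ} (x : EuclideanSpace ℝ (Fin d)) (i : Fin d) : |x i| ≤ ‖x‖ := by
  rw [EuclideanSpace.norm_eq, ← Real.sqrt_sq_eq_abs]
  apply Real.sqrt_le_sqrt
  have := Finset.single_le_sum (f := fun j => ‖x j‖ ^ 2) (fun j _ => sq_nonneg _)
    (Finset.mem_univ i)
  simpa [Real.norm_eq_abs, sq_abs] using this

lemma integral_inner_condexp {d : ℕ} {Ω : Type*} {m m0 : MeasurableSpace Ω} {μ : Measure Ω}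
    [IsProbabilityMeasure μ] (hm : m ≤ m0)
    {v G : Ω → EuclideanSpace ℝ (Fin d)}
    (hv : StronglyMeasurable[m] v) (hvsq : Integrable (fun ω => ‖v ω‖ ^ 2) μ)
    (hG : Integrable G μ) (hGsq : Integrable (fun ω => ‖G ω‖ ^ 2) μ)
    (hub : μ[G|m] =ᵐ[μ] v) :
    ∫ ω, ⟪v ω, G ω⟫ ∂μ = ∫ ω, ‖v ω‖ ^ 2 ∂μ := by
  haveI : SigmaFinite (μ.trim hm) := by
    have : IsFiniteMeasure (μ.trim hm) := isFiniteMeasure_trim hm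
    infer_instance
  have hv0 : AEStronglyMeasurable v μ := (hv.mono hm).aestronglyMeasurable
  have hvL2 : MemLp v 2 μ := (memLp_two_iff_integrable_sq_norm hv0).mpr hvsq
  have hvInt : Integrable v μ := hvL2.integrable one_le_two
  -- per-coordinate facts
  have hmul_int : ∀ i : Fin d, Integrable (fun ω => v ω i * G ω i) μ := by
    intro i
    refine Integrable.mono' (((hvsq.add hGsq).div_const 2))
      (((EuclideanSpace.proj i).continuous.comp_stronglyMeasurable hv).mono hm
        |>.aestronglyMeasurable.mul
        ((EuclideanSpace.proj i).continuous.comp_aestronglyMeasurable hG.1)) ?_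
    filter_upwards with ω
    have h1 : |v ω i| ≤ ‖v ω‖ := coord_abs_le_norm' _ _
    have h2 : |G ω i| ≤ ‖G ω‖ := coord_abs_le_norm' _ _
    have h3 : |v ω i * G ω i| ≤ ‖v ω‖ * ‖G ω‖ := by
      rw [abs_mul]
      exact mul_le_mul h1 h2 (abs_nonneg _) (norm_nonneg _)
    have h4 : ‖v ω‖ * ‖G ω‖ ≤ (‖v ω‖ ^ 2 + ‖G ω‖ ^ 2) / 2 := by nlinarith [sq_nonneg (‖v ω‖ - ‖G ω‖)]
    calc ‖v ω i * G ω i‖ = |v ω i * G ω i| := rfl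
      _ ≤ (‖v ω‖ ^ 2 + ‖G ω‖ ^ 2) / 2 := h3.trans h4
  have hvsq_int : ∀ i : Fin d, Integrable (fun ω => v ω i * v ω i) μ := by
    intro i
    refine Integrable.mono' hvsq
      ((((EuclideanSpace.proj i).continuous.comp_stronglyMeasurable hv).mono hm
        |>.aestronglyMeasurable).mul
        (((EuclideanSpace.proj i).continuous.comp_stronglyMeasurable hv).mono hm
        |>.aestronglyMeasurable)) ?_
    filter_upwards with ω
    have h1 : |v ω i| ≤ ‖v ω‖ := coord_abs_le_norm' _ _
    calc ‖v ω i * v ω i‖ = |v ω i| * |v ω i| := abs_mul _ _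
      _ ≤ ‖v ω‖ * ‖v ω‖ := mul_le_mul h1 h1 (abs_nonneg _) (norm_nonneg _)
      _ = ‖v ω‖ ^ 2 := by ring
  have hcoord : ∀ i : Fin d, ∫ ω, v ω i * G ω i ∂μ = ∫ ω, v ω i * v ω i ∂μ := by
    intro i
    have hgi_int : Integrable (fun ω => G ω i) μ := by
      simpa using (EuclideanSpace.proj (𝕜 := ℝ) i).integrable_comp hG
    have hvi_int : Integrable (fun ω => v ω i) μ := by
      simpa using (EuclideanSpace.proj (𝕜 := ℝ) i).integrable_comp hvInt
    have hvi_m : StronglyMeasurable[m] (fun ω => v ω i) :=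
      (EuclideanSpace.proj i).continuous.comp_stronglyMeasurable hv
    -- μ[G ·  i | m] = v · i
    have hkey : (fun ω => v ω i) =ᵐ[μ] μ[fun ω => G ω i|m] := by
      refine ae_eq_condExp_of_forall_setIntegral_eq hm hgi_int
        (fun s _ _ => hvi_int.integrableOn) (fun s hs hμs => ?_)
        (StronglyMeasurable.aestronglyMeasurable hvi_m)
      have h1 : ∫ ω in s, v ω i ∂μ = (∫ ω in s, v ω ∂μ) i := by
        simpa using ((EuclideanSpace.proj (𝕜 := ℝ) i).integral_comp_comm
          (hvInt.integrableOn (s := s)))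
      have h2 : ∫ ω in s, G ω i ∂μ = (∫ ω in s, G ω ∂μ) i := by
        simpa using ((EuclideanSpace.proj (𝕜 := ℝ) i).integral_comp_comm
          (hG.integrableOn (s := s)))
      have h3 : ∫ ω in s, G ω ∂μ = ∫ ω in s, v ω ∂μ := by
        rw [← setIntegral_condExp hm hG hs]
        exact setIntegral_congr_ae (hm s hs) (hub.mono fun ω h _ => h)
      rw [h1, h2, h3]
    have hpull : μ[(fun ω => v ω i) * (fun ω => G ω i)|m]
        =ᵐ[μ] (fun ω => v ω i) * μ[fun ω => G ω i|m] :=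
      condExp_mul_of_stronglyMeasurable_left hvi_m (hmul_int i) hgi_int
    calc ∫ ω, v ω i * G ω i ∂μ
        = ∫ ω, ((fun ω => v ω i) * fun ω => G ω i) ω ∂μ := rfl
      _ = ∫ ω, (μ[(fun ω => v ω i) * (fun ω => G ω i)|m]) ω ∂μ :=
          (integral_condExp hm).symm
      _ = ∫ ω, v ω i * v ω i ∂μ := by
          refine integral_congr_ae ?_
          filter_upwards [hpull, hkey] with ω h1 h2
          rw [h1]
          simp only [Pi.mul_apply]
          rw [← h2]
  -- assemble
  have hinner : ∀ ω, ⟪v ω, G ω⟫ = ∑ i, v ω i * G ω i := by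
    intro ω
    simp [PiLp.inner_apply, RCLike.inner_apply, conj_trivial]
    exact Finset.sum_congr rfl fun i _ => mul_comm _ _
  have hnormsq : ∀ ω, ‖v ω‖ ^ 2 = ∑ i, v ω i * v ω i := by
    intro ω
    rw [← real_inner_self_eq_norm_sq]
    simp only [PiLp.inner_apply, RCLike.inner_apply, conj_trivial]
  calc ∫ ω, ⟪v ω, G ω⟫ ∂μ = ∫ ω, ∑ i, v ω i * G ω i ∂μ := by simp_rw [hinner]
    _ = ∑ i, ∫ ω, v ω i * G ω i ∂μ := integral_finset_sum _ fun i _ => hmul_int i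
    _ = ∑ i, ∫ ω, v ω i * v ω i ∂μ := Finset.sum_congr rfl fun i _ => hcoord i
    _ = ∫ ω, ∑ i, v ω i * v ω i ∂μ := (integral_finset_sum _ fun i _ => hvsq_int i).symm
    _ = ∫ ω, ‖v ω‖ ^ 2 ∂μ := by simp_rw [hnormsq]

set_option maxHeartbeats 2000000 in
/-- convergence of SGD along the reference trajectory. For β-smooth `R_S`
bounded below by `R_S x_*`, an adapted trajectory `y` with deterministic `y 0 = y0`,
unbiased stochastic gradients `g t` (conditionally on the past) with second moment bounded
by σ², and updates `y (t+1) = y t - γ • g t` with `0 < γ ≤ 1/β`, one has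
`min_{0 ≤ t < T} E‖∇R_S(y t)‖² ≤ (R_S(y0) - R_S(x_*))/(γT) + βγσ²/2`. -/
theorem sgd_convergence
    {d : ℕ} (RS : EuclideanSpace ℝ (Fin d) → ℝ) (β σ γ : ℝ)
    (xstar y0 : EuclideanSpace ℝ (Fin d))
    (hβ : 0 < β)
    (hdiff : Differentiable ℝ RS)
    (hsmooth : ∀ x y, ‖gradient RS x - gradient RS y‖ ≤ β * ‖x - y‖)
    (hlb : ∀ x, RS xstar ≤ RS x)
    {Ω : Type*} {m0 : MeasurableSpace Ω} {μ : Measure Ω} [IsProbabilityMeasure μ]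
    (ℱ : Filtration ℕ m0)
    (y g : ℕ → Ω → EuclideanSpace ℝ (Fin d))
    (hadapted : Adapted ℱ y)
    (hy0 : ∀ ω, y 0 ω = y0)
    (hgmeas : ∀ t, StronglyMeasurable[ℱ (t + 1)] (g t))
    (hgint : ∀ t, Integrable (g t) μ)
    (hgsqint : ∀ t, Integrable (fun ω => ‖g t ω‖ ^ 2) μ)
    (hunbiased : ∀ t, μ[g t | ℱ t] =ᵐ[μ] fun ω => gradient RS (y t ω))
    (hsecond : ∀ t, ∫ ω, ‖g t ω‖ ^ 2 ∂μ ≤ σ ^ 2)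
    (hupdate : ∀ t ω, y (t + 1) ω = y t ω - γ • g t ω)
    (hγ0 : 0 < γ) (hγβ : γ ≤ 1 / β)
    (T : ℕ) (hT : 1 ≤ T) :
    (Finset.range T).inf' (Finset.nonempty_range_iff.mpr (by omega))
        (fun t => ∫ ω, ‖gradient RS (y t ω)‖ ^ 2 ∂μ)
      ≤ (RS y0 - RS xstar) / (γ * T) + β * γ * σ ^ 2 / 2 := by
  have hβ' : (0:ℝ) ≤ β := hβ.le
  have hgradcont : Continuous (gradient RS) := by
    have : LipschitzWith β.toNNReal (gradient RS) := by
      apply LipschitzWith.of_dist_le_mul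
      intro x z
      rw [dist_eq_norm, dist_eq_norm, Real.coe_toNNReal β hβ']
      exact hsmooth x z
    exact this.continuous
  -- descent inequality (deterministic)
  have descent : ∀ a u : EuclideanSpace ℝ (Fin d),
      RS (a + u) ≤ RS a + ⟪gradient RS a, u⟫ + β / 2 * ‖u‖ ^ 2 := by
    intro a u
    set c : ℝ → EuclideanSpace ℝ (Fin d) := fun t => a + t • u with hc
    have hderiv : ∀ t : ℝ, HasDerivAt (fun s => RS (c s)) ⟪gradient RS (c t), u⟫ t := by
      intro t
      have h1 : HasDerivAt c u t := by
        have : HasDerivAt (fun s : ℝ => s • u) ((1:ℝ) • u) t := (hasDerivAt_id t).smul_const u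
        simpa [hc] using this.const_add a
      have h2 : HasFDerivAt RS (InnerProductSpace.toDualMap ℝ _ (gradient RS (c t))) (c t) :=
        hasGradientAt_iff_hasFDerivAt.mp (hdiff (c t)).hasGradientAt
      exact h2.comp_hasDerivAt t h1
    have hccont : Continuous c := continuous_const.add (continuous_id.smul continuous_const)
    have hcont : Continuous fun t : ℝ => ⟪gradient RS (c t), u⟫ :=
      (hgradcont.comp hccont).inner continuous_const
    have hftc : RS (c 1) - RS (c 0) = ∫ t in (0:ℝ)..1, ⟪gradient RS (c t), u⟫ :=
      (intervalIntegral.integral_eq_sub_of_hasDerivAt (fun t _ => hderiv t)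
        (hcont.intervalIntegrable 0 1)).symm
    have hbound : ∫ t in (0:ℝ)..1, ⟪gradient RS (c t), u⟫
        ≤ ∫ t in (0:ℝ)..1, (⟪gradient RS a, u⟫ + β * t * ‖u‖ ^ 2) := by
      apply intervalIntegral.integral_mono_on zero_le_one (hcont.intervalIntegrable 0 1)
      · exact (continuous_const.add ((continuous_const.mul continuous_id).mul
          continuous_const)).intervalIntegrable 0 1
      · intro t ht
        have h1 : ⟪gradient RS (c t), u⟫ - ⟪gradient RS a, u⟫
            = ⟪gradient RS (c t) - gradient RS a, u⟫ := by rw [inner_sub_left]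
        have h2 : ⟪gradient RS (c t) - gradient RS a, u⟫ ≤ β * t * ‖u‖ ^ 2 := by
          calc ⟪gradient RS (c t) - gradient RS a, u⟫
              ≤ ‖gradient RS (c t) - gradient RS a‖ * ‖u‖ := real_inner_le_norm _ _
            _ ≤ (β * ‖c t - a‖) * ‖u‖ :=
                mul_le_mul_of_nonneg_right (hsmooth _ _) (norm_nonneg _)
            _ = β * t * ‖u‖ ^ 2 := by
                have : ‖c t - a‖ = t * ‖u‖ := by
                  simp [hc, norm_smul, abs_of_nonneg ht.1]
                rw [this]; ring
        linarith [h1, h2]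
    have h2 : ∫ t in (0:ℝ)..1, β * t * ‖u‖ ^ 2 = β / 2 * ‖u‖ ^ 2 := by
      have he : (fun t : ℝ => β * t * ‖u‖ ^ 2) = fun t : ℝ => (β * ‖u‖ ^ 2) * t := by
        funext t; ring
      rw [he, intervalIntegral.integral_const_mul, integral_id]; ring
    have hval : ∫ t in (0:ℝ)..1, (⟪gradient RS a, u⟫ + β * t * ‖u‖ ^ 2)
        = ⟪gradient RS a, u⟫ + β / 2 * ‖u‖ ^ 2 := by
      have hint2 : IntervalIntegrable (fun t : ℝ => β * t * ‖u‖ ^ 2) MeasureTheory.volume 0 1 :=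
        Continuous.intervalIntegrable (by continuity) 0 1
      rw [intervalIntegral.integral_add intervalIntegrable_const hint2, h2]
      simp
    have hc1 : c 1 = a + u := by simp [hc]
    have hc0 : c 0 = a := by simp [hc]
    rw [hc1, hc0] at hftc
    rw [hval] at hbound
    linarith [hftc, hbound]
  -- measurability / integrability setup
  have hvm : ∀ t, StronglyMeasurable[ℱ t] (fun ω => gradient RS (y t ω)) := fun t =>
    hgradcont.comp_stronglyMeasurable (hadapted t).stronglyMeasurable
  have hvasm : ∀ t, AEStronglyMeasurable (fun ω => gradient RS (y t ω)) μ := fun t =>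
    ((hvm t).mono (ℱ.le t)).aestronglyMeasurable
  have hgL2 : ∀ t, MemLp (g t) 2 μ := fun t =>
    (memLp_two_iff_integrable_sq_norm (hgint t).1).mpr (hgsqint t)
  have hy_sum : ∀ t ω, y t ω = y0 - ∑ s ∈ Finset.range t, γ • g s ω := by
    intro t
    induction t with
    | zero => intro ω; simp [hy0 ω]
    | succ t ih =>
        intro ω
        rw [hupdate t ω, ih ω, Finset.sum_range_succ, sub_sub]
  have hyL2 : ∀ t, MemLp (y t) 2 μ := by
    intro t
    have hyt : y t = fun ω => y0 - ∑ s ∈ Finset.range t, γ • g s ω := funext (hy_sum t)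
    rw [hyt]
    exact (memLp_const y0).sub (memLp_finset_sum _ fun s _ => (hgL2 s).const_smul γ)
  have hvL2 : ∀ t, MemLp (fun ω => gradient RS (y t ω)) 2 μ := by
    intro t
    have hB : MemLp (fun ω => ‖gradient RS y0‖ + β * ‖y t ω - y0‖) 2 μ :=
      (memLp_const ‖gradient RS y0‖).add (((hyL2 t).sub (memLp_const y0)).norm.const_mul β)
    refine MemLp.of_le hB (hvasm t) ?_
    filter_upwards with ω
    have h1 : ‖gradient RS (y t ω)‖ ≤ ‖gradient RS y0‖ + β * ‖y t ω - y0‖ := by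
      have := hsmooth (y t ω) y0
      have htri : ‖gradient RS (y t ω)‖ ≤ ‖gradient RS y0‖ + ‖gradient RS (y t ω) - gradient RS y0‖ := by
        simpa using norm_le_norm_add_norm_sub' (gradient RS (y t ω)) (gradient RS y0)
      linarith
    have h2 : (0:ℝ) ≤ ‖gradient RS y0‖ + β * ‖y t ω - y0‖ :=
      add_nonneg (norm_nonneg _) (mul_nonneg hβ' (norm_nonneg _))
    calc ‖gradient RS (y t ω)‖ ≤ ‖gradient RS y0‖ + β * ‖y t ω - y0‖ := h1
      _ = ‖‖gradient RS y0‖ + β * ‖y t ω - y0‖‖ := (Real.norm_of_nonneg h2).symm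
  have hvsq : ∀ t, Integrable (fun ω => ‖gradient RS (y t ω)‖ ^ 2) μ := fun t =>
    (memLp_two_iff_integrable_sq_norm (hvasm t)).mp (hvL2 t)
  have hinner_int : ∀ t, Integrable (fun ω => ⟪gradient RS (y t ω), g t ω⟫) μ := by
    intro t
    refine Integrable.mono' (((hvsq t).add (hgsqint t)).div_const 2)
      ((hvasm t).inner (hgint t).1) ?_
    filter_upwards with ω
    have h1 : ‖⟪gradient RS (y t ω), g t ω⟫‖ ≤ ‖gradient RS (y t ω)‖ * ‖g t ω‖ := by
      rw [Real.norm_eq_abs]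
      exact abs_real_inner_le_norm _ _
    have h2 : ‖gradient RS (y t ω)‖ * ‖g t ω‖ ≤ (‖gradient RS (y t ω)‖ ^ 2 + ‖g t ω‖ ^ 2) / 2 := by
      nlinarith [sq_nonneg (‖gradient RS (y t ω)‖ - ‖g t ω‖)]
    exact h1.trans h2
  have hkeyinner : ∀ t, ∫ ω, ⟪gradient RS (y t ω), g t ω⟫ ∂μ = ∫ ω, ‖gradient RS (y t ω)‖ ^ 2 ∂μ := fun t =>
    integral_inner_condexp (ℱ.le t) (hvm t) (hvsq t) (hgint t) (hgsqint t) (hunbiased t)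
  -- pointwise descent step
  have hstep : ∀ t ω, RS (y (t + 1) ω)
      ≤ RS (y t ω) - γ * ⟪gradient RS (y t ω), g t ω⟫ + β * γ ^ 2 / 2 * ‖g t ω‖ ^ 2 := by
    intro t ω
    have hd := descent (y t ω) (-(γ • g t ω))
    have hyy : y t ω + -(γ • g t ω) = y (t + 1) ω := by rw [hupdate t ω]; abel
    rw [hyy] at hd
    have hi : ⟪gradient RS (y t ω), -(γ • g t ω)⟫ = -(γ * ⟪gradient RS (y t ω), g t ω⟫) := by
      rw [inner_neg_right, real_inner_smul_right]
    have hn : ‖-(γ • g t ω)‖ ^ 2 = γ ^ 2 * ‖g t ω‖ ^ 2 := by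
      rw [norm_neg, norm_smul, Real.norm_eq_abs, mul_pow, sq_abs]
    rw [hi, hn] at hd
    have hr : β / 2 * (γ ^ 2 * ‖g t ω‖ ^ 2) = β * γ ^ 2 / 2 * ‖g t ω‖ ^ 2 := by ring
    linarith [hd, hr.le, hr.ge]
  -- integrability of RS ∘ y t
  have hRSasm : ∀ t, AEStronglyMeasurable (fun ω => RS (y t ω)) μ := fun t =>
    hdiff.continuous.comp_aestronglyMeasurable ((hadapted t).stronglyMeasurable.mono (ℱ.le t)).aestronglyMeasurable
  have hRSint : ∀ t, Integrable (fun ω => RS (y t ω)) μ := by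
    intro t
    induction t with
    | zero =>
        have : (fun ω => RS (y 0 ω)) = fun _ : Ω => RS y0 := by
          funext ω; rw [hy0 ω]
        rw [this]; exact integrable_const _
    | succ t ih =>
        have hF : Integrable
            (fun ω => RS (y t ω) - γ * ⟪gradient RS (y t ω), g t ω⟫ + β * γ ^ 2 / 2 * ‖g t ω‖ ^ 2) μ :=
          (ih.sub ((hinner_int t).const_mul γ)).add ((hgsqint t).const_mul _)
        refine Integrable.mono' (hF.abs.add (integrable_const |RS xstar|)) (hRSasm (t + 1)) ?_
        filter_upwards with ω
        have h1 := hstep t ω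
        have h2 := hlb (y (t + 1) ω)
        have h3 := le_abs_self
          (RS (y t ω) - γ * ⟪gradient RS (y t ω), g t ω⟫ + β * γ ^ 2 / 2 * ‖g t ω‖ ^ 2)
        have h4 := abs_nonneg
          (RS (y t ω) - γ * ⟪gradient RS (y t ω), g t ω⟫ + β * γ ^ 2 / 2 * ‖g t ω‖ ^ 2)
        have h5 := neg_abs_le (RS xstar)
        have h6 := abs_nonneg (RS xstar)
        rw [Real.norm_eq_abs, abs_le]
        constructor <;> simp only [Pi.add_apply, Pi.abs_apply] <;> linarith
  -- one-step expectation inequality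
  have hE : ∀ t, ∫ ω, RS (y (t + 1) ω) ∂μ
      ≤ ∫ ω, RS (y t ω) ∂μ - γ * ∫ ω, ‖gradient RS (y t ω)‖ ^ 2 ∂μ + β * γ ^ 2 / 2 * σ ^ 2 := by
    intro t
    have hF : Integrable
        (fun ω => RS (y t ω) - γ * ⟪gradient RS (y t ω), g t ω⟫ + β * γ ^ 2 / 2 * ‖g t ω‖ ^ 2) μ :=
      ((hRSint t).sub ((hinner_int t).const_mul γ)).add ((hgsqint t).const_mul _)
    have hmono : ∫ ω, RS (y (t + 1) ω) ∂μ
        ≤ ∫ ω, (RS (y t ω) - γ * ⟪gradient RS (y t ω), g t ω⟫ + β * γ ^ 2 / 2 * ‖g t ω‖ ^ 2) ∂μ :=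
      integral_mono (hRSint (t + 1)) hF (fun ω => hstep t ω)
    have hsplit : ∫ ω, (RS (y t ω) - γ * ⟪gradient RS (y t ω), g t ω⟫ + β * γ ^ 2 / 2 * ‖g t ω‖ ^ 2) ∂μ
        = ∫ ω, RS (y t ω) ∂μ - γ * ∫ ω, ⟪gradient RS (y t ω), g t ω⟫ ∂μ
          + β * γ ^ 2 / 2 * ∫ ω, ‖g t ω‖ ^ 2 ∂μ := by
      have hC : Integrable (fun ω => γ * ⟪gradient RS (y t ω), g t ω⟫) μ :=
        (hinner_int t).const_mul γ
      have hA : Integrable (fun ω => RS (y t ω) - γ * ⟪gradient RS (y t ω), g t ω⟫) μ :=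
        (hRSint t).sub hC
      have hB : Integrable (fun ω => β * γ ^ 2 / 2 * ‖g t ω‖ ^ 2) μ :=
        (hgsqint t).const_mul _
      rw [integral_add hA hB, integral_sub (hRSint t) hC, integral_const_mul,
        integral_const_mul]
    have hc : (0:ℝ) ≤ β * γ ^ 2 / 2 := by positivity
    have hlast : β * γ ^ 2 / 2 * ∫ ω, ‖g t ω‖ ^ 2 ∂μ ≤ β * γ ^ 2 / 2 * σ ^ 2 :=
      mul_le_mul_of_nonneg_left (hsecond t) hc
    rw [hsplit, hkeyinner t] at hmono
    linarith
  -- telescoping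
  have htel : ∀ n, ∫ ω, RS (y n ω) ∂μ + γ * ∑ t ∈ Finset.range n, ∫ ω, ‖gradient RS (y t ω)‖ ^ 2 ∂μ
      ≤ RS y0 + n * (β * γ ^ 2 / 2 * σ ^ 2) := by
    intro n
    induction n with
    | zero =>
        have : (fun ω => RS (y 0 ω)) = fun _ : Ω => RS y0 := by funext ω; rw [hy0 ω]
        simp [this]
    | succ n ih =>
        have h := hE n
        rw [Finset.sum_range_succ, mul_add]
        push_cast
        linarith
  -- conclude
  have hge : RS xstar ≤ ∫ ω, RS (y T ω) ∂μ := by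
    have h := integral_mono (integrable_const (RS xstar)) (hRSint T) (fun ω => hlb (y T ω))
    simpa using h
  have hTineq : γ * ∑ t ∈ Finset.range T, ∫ ω, ‖gradient RS (y t ω)‖ ^ 2 ∂μ
      ≤ RS y0 - RS xstar + T * (β * γ ^ 2 / 2 * σ ^ 2) := by
    have := htel T
    linarith
  set I := (Finset.range T).inf' (Finset.nonempty_range_iff.mpr (by omega))
      (fun t => ∫ ω, ‖gradient RS (y t ω)‖ ^ 2 ∂μ) with hI
  have hsum : (T:ℝ) * I ≤ ∑ t ∈ Finset.range T, ∫ ω, ‖gradient RS (y t ω)‖ ^ 2 ∂μ := by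
    calc (T:ℝ) * I = ∑ _t ∈ Finset.range T, I := by
          rw [Finset.sum_const, Finset.card_range, nsmul_eq_mul]
      _ ≤ ∑ t ∈ Finset.range T, ∫ ω, ‖gradient RS (y t ω)‖ ^ 2 ∂μ := by
          refine Finset.sum_le_sum fun t ht => ?_
          exact Finset.inf'_le _ ht
  have hTpos : (0:ℝ) < T := by
    have : 0 < T := by omega
    exact_mod_cast this
  have hγT : 0 < γ * (T:ℝ) := mul_pos hγ0 hTpos
  have hfinal : I ≤ (RS y0 - RS xstar + T * (β * γ ^ 2 / 2 * σ ^ 2)) / (γ * T) := by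
    rw [le_div_iff₀ hγT]
    have h1 : I * (γ * T) = γ * ((T:ℝ) * I) := by ring
    have h2 : γ * ((T:ℝ) * I) ≤ γ * ∑ t ∈ Finset.range T, ∫ ω, ‖gradient RS (y t ω)‖ ^ 2 ∂μ :=
      mul_le_mul_of_nonneg_left hsum hγ0.le
    linarith
  have heq : (RS y0 - RS xstar + T * (β * γ ^ 2 / 2 * σ ^ 2)) / (γ * T)
      = (RS y0 - RS xstar) / (γ * T) + β * γ * σ ^ 2 / 2 := by
    field_simp
  rw [heq] at hfinal
  exact hfinal
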